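/- For natural numbers N ≥ 1 and M ≥ 2N², the ratio of the number of collision outcomes to the number of collision-free outcomes satisfies (C(M+N−1,N) − C(M,N)) / C(M,N) < 2N²/M, as real numbers. -/

import Mathlib

private lemma key_step (b d m : ℕ) : (b + d) * (b - (m + d)) ≤ b * (b - m) := by
  rcases le_or_gt b (m + d) with h | h
  · simp [Nat.sub_eq_zero_of_le h]
  · have h2 : b - m = (b - (m + d)) + d := by omega
    have hc : b - (m + d) ≤ b := Nat.sub_le _ _
    rw [h2]
    nlinarith

private lemma pow_mul_sub_le (b d : ℕ) : ∀ n : ℕ, (b + d) ^ n * (b - n * d) ≤ b ^ (n + 1) := by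
  intro n
  induction n with
  | zero => simp
  | succ n ih =>
    have hsp : (n + 1) * d = n * d + d := by ring
    calc (b + d) ^ (n + 1) * (b - (n + 1) * d)
        = (b + d) ^ n * ((b + d) * (b - (n * d + d))) := by rw [hsp]; ring
      _ ≤ (b + d) ^ n * (b * (b - n * d)) := Nat.mul_le_mul_left _ (key_step b d (n * d))
      _ = b * ((b + d) ^ n * (b - n * d)) := by ring
      _ ≤ b * b ^ (n + 1) := Nat.mul_le_mul_left _ ih
      _ = b ^ (n + 2) := by ring

private lemma choose_mul_pow_le (M N : ℕ) (h : N ≤ M) :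
    (M + N - 1).choose N * (M - N + 1) ^ N ≤ M.choose N * M ^ N := by
  have hd : (M + N - 1).descFactorial N * (M - N + 1) ^ N ≤
      M.descFactorial N * M ^ N := by
    rw [Nat.descFactorial_eq_prod_range, Nat.descFactorial_eq_prod_range]
    calc (∏ i ∈ Finset.range N, (M + N - 1 - i)) * (M - N + 1) ^ N
        = ∏ i ∈ Finset.range N, ((M + N - 1 - i) * (M - N + 1)) := by
          rw [Finset.prod_mul_distrib, Finset.prod_const, Finset.card_range]
      _ ≤ ∏ i ∈ Finset.range N, ((M - i) * M) := by
          apply Finset.prod_le_prod'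
          intro i hi
          rw [Finset.mem_range] at hi
          have hi1 : i ≤ M + N - 1 := by omega
          have hi2 : i ≤ M := by omega
          have hNM : N ≤ M := h
          have hMN1 : 1 ≤ M + N := by omega
          zify [hi1, hi2, hNM, hMN1]
          have hu : (0 : ℤ) ≤ (N : ℤ) - 1 - i := by
            have : (i : ℤ) + 1 ≤ N := by exact_mod_cast hi
            linarith
          have hv : (0 : ℤ) ≤ (N : ℤ) - 1 := by
            have : (1 : ℤ) ≤ N := by
              have : 1 ≤ N := by omega
              exact_mod_cast this
            linarith
          nlinarith [mul_nonneg hu hv]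
      _ = (∏ i ∈ Finset.range N, (M - i)) * M ^ N := by
          rw [Finset.prod_mul_distrib, Finset.prod_const, Finset.card_range]
  rw [Nat.descFactorial_eq_factorial_mul_choose, Nat.descFactorial_eq_factorial_mul_choose] at hd
  have hfac : 0 < Nat.factorial N := Nat.factorial_pos N
  have : Nat.factorial N * ((M + N - 1).choose N * (M - N + 1) ^ N) ≤
      Nat.factorial N * (M.choose N * M ^ N) := by
    calc Nat.factorial N * ((M + N - 1).choose N * (M - N + 1) ^ N)
        = Nat.factorial N * (M + N - 1).choose N * (M - N + 1) ^ N := by ring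
      _ ≤ Nat.factorial N * M.choose N * M ^ N := hd
      _ = Nat.factorial N * (M.choose N * M ^ N) := by ring
  exact Nat.le_of_mul_le_mul_left this hfac

/-- For `N ≥ 1` and `M ≥ 2N²`, the ratio of the number of collision outcomes
(`C(M+N-1,N) - C(M,N)`) to the number of collision-free outcomes (`C(M,N)`) of Boson
Sampling with `M` modes and `N` photons is smaller than `2N²/M`. -/
theorem collision_ratio_lt (N M : ℕ) (h1 : 1 ≤ N) (h2 : 2 * N ^ 2 ≤ M) :
    (((M + N - 1).choose N : ℝ) - (M.choose N : ℝ)) / (M.choose N : ℝ) <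
      2 * (N : ℝ) ^ 2 / (M : ℝ) := by
  have hk : N * (N - 1) + N = N ^ 2 := by
    obtain ⟨n, rfl⟩ := Nat.exists_eq_add_of_le h1
    simp [Nat.add_sub_cancel_left]
    ring
  have hN : N ≤ M := by nlinarith
  have hC : 0 < M.choose N := Nat.choose_pos hN
  set C := M.choose N with hCdef
  set C' := (M + N - 1).choose N with hC'def
  set b := M - N + 1 with hbdef
  have hbm : b + (N - 1) = M := by omega
  have hbpos : 0 < b := by omega
  -- key cancellation
  have h2' : C' * b ^ N ≤ C * M ^ N := choose_mul_pow_le M N hN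
  have h1' : M ^ N * (b - N * (N - 1)) ≤ b ^ (N + 1) := by
    have := pow_mul_sub_le b (N - 1) N
    rwa [hbm] at this
  set A := b - N * (N - 1) with hAdef
  have hAlin : A + N * (N - 1) = b := by
    have : N * (N - 1) ≤ b := by omega
    omega
  have hchain : C' * A * b ^ N ≤ C * b * b ^ N := by
    calc C' * A * b ^ N = (C' * b ^ N) * A := by ring
      _ ≤ (C * M ^ N) * A := Nat.mul_le_mul_right A h2'
      _ = C * (M ^ N * A) := by ring
      _ ≤ C * b ^ (N + 1) := Nat.mul_le_mul_left C h1'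
      _ = C * b * b ^ N := by ring
  have hkey : C' * A ≤ C * b := Nat.le_of_mul_le_mul_right hchain (Nat.pow_pos hbpos)
  have h2a : 2 * A + 2 * N ^ 2 = 2 * M + 2 := by omega
  have hMbA : M * b < A * (M + 2 * N ^ 2) := by
    nlinarith [Nat.mul_le_mul_right (N ^ 2) h2, hAlin, h2a, hk, h1, hN]
  have hApos : 0 < A := by omega
  have hfin : M * C' < (M + 2 * N ^ 2) * C := by
    have hmul : A * (M * C') < A * ((M + 2 * N ^ 2) * C) := by
      calc A * (M * C') = M * (C' * A) := by ring
        _ ≤ M * (C * b) := Nat.mul_le_mul_left M hkey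
        _ = (M * b) * C := by ring
        _ < (A * (M + 2 * N ^ 2)) * C := Nat.mul_lt_mul_of_pos_right hMbA hC
        _ = A * ((M + 2 * N ^ 2) * C) := by ring
    exact Nat.lt_of_mul_lt_mul_left hmul
  have hCpos : (0 : ℝ) < (C : ℝ) := by exact_mod_cast hC
  have hMpos : (0 : ℝ) < (M : ℝ) := by
    have : 0 < M := by omega
    exact_mod_cast this
  rw [div_lt_div_iff₀ hCpos hMpos]
  have hfinR : (M : ℝ) * C' < ((M : ℝ) + 2 * (N : ℝ) ^ 2) * C := by exact_mod_cast hfin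
  nlinarith [hfinR]
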